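/- Let q be a prime power and s₁, s₂, m positive integers with n ≤ s₁, s₁ | s₂, s₂ | m, and F_q ⊊ F_{q^{s₁}} ⊊ F_{q^{s₂}} ⊊ F_{q^m} a proper chain of subfields. Let k < n, let α_1,...,α_n ∈ F_{q^{s₁}} be linearly independent over F_q, let η₁ ∈ F_{q^{s₂}} \ F_{q^{s₁}} and η₂ ∈ F_{q^m} \ F_{q^{s₂}}. Fix 0 ≤ h ≤ k-1 and 0 ≤ t₁ < t₂ ≤ n-k-1. Then the twisted Gabidulin code C₂ with two twists, generated by the Moore matrix rows (α_j^{q^i})_j for i ≠ h together with the row (α_j^{q^h} + η₁ α_j^{q^{k+t₁}} + η₂ α_j^{q^{k+t₂}})_j, is an MRD code over F_{q^m}. -/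

import Mathlib

open Finset

namespace C2Aux
variable {K : Type*} [Field K]

def ev (q N : ℕ) (c : ℕ → K) (x : K) : K := ∑ i ∈ Finset.range N, c i * x ^ q ^ i

def Fc (k t₁ t₂ : ℕ) (lam : ℕ → K) (lamh η₁ η₂ : K) (j : ℕ) : K :=
  if j < k then lam j else if j = k + t₁ then η₁ * lamh
  else if j = k + t₂ then η₂ * lamh else 0

def divSeq (q k t₂ : ℕ) (F m : ℕ → K) : ℕ → K
  | d =>
    F (k + (t₂ - d)) - ∑ r ∈ (Finset.range d).attach,
      (if t₂ - (r : ℕ) ≤ k + (t₂ - d) then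
        divSeq q k t₂ F m (r : ℕ) * m ((k + (t₂ - d)) - (t₂ - (r : ℕ))) ^ q ^ (t₂ - (r : ℕ))
      else 0)
  termination_by d => d
  decreasing_by exact Finset.mem_range.mp r.2

def termD (q k t₂ : ℕ) (F m : ℕ → K) (j d : ℕ) : K :=
  if t₂ - d ≤ j then
    divSeq q k t₂ F m d * m (j - (t₂ - d)) ^ q ^ (t₂ - d)
  else 0

def Cc (q k t₂ : ℕ) (F m : ℕ → K) (j : ℕ) : K :=
  ∑ d ∈ Finset.range (t₂ + 1), termD q k t₂ F m j d

lemma divSeq_eq (q k t₂ : ℕ) (F m : ℕ → K) (d : ℕ) :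
    divSeq q k t₂ F m d =
      F (k + (t₂ - d)) - ∑ r ∈ Finset.range d, termD q k t₂ F m (k + (t₂ - d)) r := by
  rw [divSeq]
  congr 1
  rw [← Finset.sum_attach (Finset.range d) (fun r => termD q k t₂ F m (k + (t₂ - d)) r)]
  rfl

/-- the formal division matches all coefficients from `k` to `k+t₂`. -/
lemma Cc_eq_F (q k t₂ : ℕ) (hq0 : 0 < q) (F m : ℕ → K) (hmk : m k = 1) (hm0 : ∀ a, k < a → m a = 0)
    (e : ℕ) (he : e ≤ t₂) :
    Cc q k t₂ F m (k + (t₂ - e)) = F (k + (t₂ - e)) := by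
  have hsub : Finset.range (e + 1) ⊆ Finset.range (t₂ + 1) := by
    apply Finset.range_subset_range.2; omega
  have hz : ∀ d ∈ Finset.range (t₂ + 1), d ∉ Finset.range (e + 1) →
      termD q k t₂ F m (k + (t₂ - e)) d = 0 := by
    intro d hd hd'
    simp only [Finset.mem_range] at hd hd'
    have hde : e < d := by omega
    unfold termD
    rw [if_pos (by omega)]
    rw [hm0 _ (by omega), zero_pow (Nat.pow_pos hq0).ne', mul_zero]
  unfold Cc
  rw [← Finset.sum_subset hsub hz, Finset.sum_range_succ]
  have hlast : termD q k t₂ F m (k + (t₂ - e)) e = divSeq q k t₂ F m e := by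
    unfold termD
    rw [if_pos (by omega)]
    have : k + (t₂ - e) - (t₂ - e) = k := by omega
    rw [this, hmk, one_pow, mul_one]
  rw [hlast, divSeq_eq]
  ring

/-- coefficients above `k+t₂` of the composition vanish. -/
lemma Cc_eq_zero (q k t₂ : ℕ) (hq0 : 0 < q) (F m : ℕ → K) (hm0 : ∀ a, k < a → m a = 0)
    (j : ℕ) (hj : k + t₂ < j) : Cc q k t₂ F m j = 0 := by
  unfold Cc
  apply Finset.sum_eq_zero
  intro d hd
  simp only [Finset.mem_range] at hd
  unfold termD
  rw [if_pos (by omega), hm0 _ (by omega), zero_pow (Nat.pow_pos hq0).ne', mul_zero]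


lemma ev_comp (q k t₂ : ℕ) (hq0 : 0 < q) (F m : ℕ → K) (hm0 : ∀ a, k < a → m a = 0)
    (hfr : ∀ (s : Finset ℕ) (f : ℕ → K) (i : ℕ),
      (∑ a ∈ s, f a) ^ q ^ i = ∑ a ∈ s, (f a) ^ q ^ i)
    (x : K) :
    ev q (k + t₂ + 1) (Cc q k t₂ F m) x
      = ∑ d ∈ Finset.range (t₂ + 1),
          divSeq q k t₂ F m d * (ev q (k + 1) m x) ^ q ^ (t₂ - d) := by
  set N := k + t₂ + 1 with hN
  unfold ev Cc
  simp_rw [Finset.sum_mul]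
  rw [Finset.sum_comm]
  apply Finset.sum_congr rfl
  intro d hd
  simp only [Finset.mem_range] at hd
  set b := t₂ - d with hb
  have hbt : b ≤ t₂ := Nat.sub_le _ _
  -- RHS for this d
  rw [hfr, Finset.mul_sum]
  -- LHS: drop i < b
  have hsub : Finset.Ico b N ⊆ Finset.range N := by
    intro i hi; simp only [Finset.mem_Ico] at hi; exact Finset.mem_range.2 hi.2
  rw [← Finset.sum_subset hsub (by
    intro i hi hi'
    simp only [Finset.mem_range] at hi
    simp only [Finset.mem_Ico, not_and, not_le] at hi'
    have : i < b := by by_contra hc; exact absurd (hi' (by omega)) (by omega)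
    unfold termD
    rw [if_neg (by omega), zero_mul])]
  rw [Finset.sum_Ico_eq_sum_range]
  have hkN : k + 1 ≤ N - b := by omega
  have hsub2 : Finset.range (k + 1) ⊆ Finset.range (N - b) := Finset.range_subset_range.2 hkN
  rw [← Finset.sum_subset hsub2 (by
    intro a ha ha'
    simp only [Finset.mem_range] at ha ha'
    unfold termD
    rw [if_pos (by omega), hm0 (b + a - b) (by omega), zero_pow (Nat.pow_pos hq0).ne',
      mul_zero, zero_mul])]
  apply Finset.sum_congr rfl
  intro a _
  unfold termD
  rw [if_pos (by omega)]
  have h1 : b + a - b = a := by omega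
  rw [h1, mul_pow, ← pow_mul, ← pow_add, Nat.add_comm a b]
  ring

lemma sum_pow_q (q : ℕ) (hq0 : 0 < q)
    (hfr1 : ∀ x y : K, ∀ i : ℕ, (x + y) ^ q ^ i = x ^ q ^ i + y ^ q ^ i)
    {ι : Type*} (s : Finset ι) (f : ι → K) (i : ℕ) :
    (∑ a ∈ s, f a) ^ q ^ i = ∑ a ∈ s, f a ^ q ^ i := by
  classical
  induction s using Finset.cons_induction with
  | empty => simp [zero_pow (Nat.pow_pos hq0).ne']
  | cons a s ha ih => rw [Finset.sum_cons, Finset.sum_cons, hfr1, ih]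

lemma ev_sub (q N : ℕ) (c₁ c₂ : ℕ → K) (x : K) :
    ev q N (fun j => c₁ j - c₂ j) x = ev q N c₁ x - ev q N c₂ x := by
  unfold ev
  rw [← Finset.sum_sub_distrib]
  exact Finset.sum_congr rfl fun i _ => by ring

lemma ev_extend (q k N : ℕ) (c : ℕ → K) (x : K) (hkN : k ≤ N)
    (h0 : ∀ j, k ≤ j → j < N → c j = 0) : ev q N c x = ev q k c x := by
  unfold ev
  refine (Finset.sum_subset (Finset.range_subset_range.2 hkN) ?_).symm
  intro j hj hj'
  simp only [Finset.mem_range] at hj hj'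
  rw [h0 j (by omega) hj, zero_mul]

lemma ev_linear {Fq : Type*} [Field Fq] [Fintype Fq] [Algebra Fq K]
    (q N : ℕ) (hq : Fintype.card Fq = q)
    (hfr1 : ∀ x y : K, ∀ i : ℕ, (x + y) ^ q ^ i = x ^ q ^ i + y ^ q ^ i)
    (c : ℕ → K) {ι : Type*} [Fintype ι] (w : ι → Fq) (x : ι → K) :
    ev q N c (∑ j, w j • x j) = ∑ j, w j • ev q N c (x j) := by
  have hq0 : 0 < q := hq ▸ Fintype.card_pos
  have hfix : ∀ (a : Fq) (i : ℕ),
      (algebraMap Fq K a) ^ q ^ i = algebraMap Fq K a := by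
    intro a i
    induction i with
    | zero => rw [pow_zero, pow_one]
    | succ i ih =>
        rw [pow_succ, pow_mul, ih, ← map_pow, ← hq, FiniteField.pow_card]
  unfold ev
  have hpt : ∀ i : ℕ, c i * (∑ j, w j • x j) ^ q ^ i = ∑ j, w j • (c i * x j ^ q ^ i) := by
    intro i
    rw [sum_pow_q q hq0 hfr1, Finset.mul_sum]
    refine Finset.sum_congr rfl fun j _ => ?_
    rw [Algebra.smul_def, mul_pow, hfix, Algebra.smul_def]
    ring
  simp_rw [hpt]
  rw [Finset.sum_comm]
  exact Finset.sum_congr rfl fun j _ => (Finset.smul_sum).symm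

noncomputable def RR (q k : ℕ) (c : ℕ → K) : Polynomial K :=
  ∑ i ∈ Finset.range k, Polynomial.C (c i) * Polynomial.X ^ q ^ i

lemma RR_eval (q k : ℕ) (c : ℕ → K) (x : K) : (RR q k c).eval x = ev q k c x := by
  unfold RR ev
  simp [Polynomial.eval_finset_sum]

lemma RR_natDegree (q k : ℕ) (hq0 : 0 < q) (hk : 0 < k) (c : ℕ → K) :
    (RR q k c).natDegree ≤ q ^ (k - 1) := by
  unfold RR
  apply Polynomial.natDegree_sum_le_of_forall_le
  intro i hi
  simp only [Finset.mem_range] at hi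
  exact (Polynomial.natDegree_C_mul_X_pow_le _ _).trans
    (Nat.pow_le_pow_right hq0 (by omega))

lemma RR_coeff (q k : ℕ) (hq2 : 2 ≤ q) (c : ℕ → K) (i : ℕ) (hi : i < k) :
    (RR q k c).coeff (q ^ i) = c i := by
  unfold RR
  rw [Polynomial.finset_sum_coeff]
  rw [Finset.sum_eq_single_of_mem i (Finset.mem_range.2 hi)]
  · simp [Polynomial.coeff_C_mul, Polynomial.coeff_X_pow]
  · intro j _ hj
    simp only [Polynomial.coeff_C_mul, Polynomial.coeff_X_pow]
    rw [if_neg (fun hc => hj (Nat.pow_right_injective hq2 hc.symm)), mul_zero]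

lemma no_rel (A1 A2 : Subfield K) (hsub : A1 ≤ A2) {η₁ η₂ a b : K}
    (hη₁ : η₁ ∈ A2) (hη₁' : η₁ ∉ A1) (hη₂ : η₂ ∉ A2)
    (ha : a ∈ A1) (hb : b ∈ A1) (heq : (1 : K) = η₁ * a + η₂ * b) : False := by
  by_cases hb0 : b = 0
  · subst hb0
    rw [mul_zero, add_zero] at heq
    have ha0 : a ≠ 0 := by rintro rfl; rw [mul_zero] at heq; exact one_ne_zero heq
    exact hη₁' ((eq_inv_of_mul_eq_one_left heq.symm) ▸ A1.inv_mem ha)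
  · apply hη₂
    have h1 : η₂ * b = 1 - η₁ * a := by linear_combination -heq
    have : η₂ = (1 - η₁ * a) * b⁻¹ := by
      rw [← h1, mul_assoc, mul_inv_cancel₀ hb0, mul_one]
    rw [this]
    exact A2.mul_mem (A2.sub_mem A2.one_mem (A2.mul_mem hη₁ (hsub ha)))
      (A2.inv_mem (hsub hb))

lemma exists_m (q : ℕ) (hq0 : 0 < q)
    (hfr1 : ∀ x y : K, ∀ i : ℕ, (x + y) ^ q ^ i = x ^ q ^ i + y ^ q ^ i)
    (A1 : Subfield K) :
    ∀ (k : ℕ) (u : Fin k → K), (∀ i, u i ∈ A1) →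
    ∃ m : ℕ → K, m k = 1 ∧ (∀ a, k < a → m a = 0) ∧ (∀ a, m a ∈ A1) ∧
      (∀ i, ev q (k + 1) m (u i) = 0) := by
  intro k
  induction k with
  | zero =>
      intro u _
      refine ⟨fun a => if a = 0 then 1 else 0, by simp, fun a ha => by
        simp [show a ≠ 0 by omega], fun a => ?_, fun i => i.elim0⟩
      by_cases h : a = 0 <;> simp [h, A1.one_mem, A1.zero_mem]
  | succ k ih =>
      intro u huA
      obtain ⟨m, hmk, hm0, hmA, hmev⟩ := ih (fun i => u i.castSucc)
        (fun i => huA i.castSucc)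
      set z := ev q (k + 1) m (u (Fin.last k)) with hz
      set c := z ^ (q - 1) with hc
      have hev' : ∀ x : K,
          ev q (k + 2) (fun a => (if 1 ≤ a then m (a - 1) ^ q else 0) - c * m a) x
            = (ev q (k + 1) m x) ^ q - c * ev q (k + 1) m x := by
        intro x
        unfold ev
        simp only [sub_mul]
        rw [Finset.sum_sub_distrib]
        congr 1
        · rw [Finset.sum_range_succ']
          rw [if_neg (by omega), zero_mul, add_zero]
          have hs : (∑ i ∈ Finset.range (k + 1), m i * x ^ q ^ i) ^ q
              = ∑ i ∈ Finset.range (k + 1), (m i * x ^ q ^ i) ^ q := by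
            simpa [pow_one] using
              sum_pow_q q hq0 hfr1 (Finset.range (k + 1)) (fun i => m i * x ^ q ^ i) 1
          rw [hs]
          refine Finset.sum_congr rfl fun i _ => ?_
          rw [if_pos (Nat.le_add_left 1 i), Nat.add_sub_cancel, mul_pow, ← pow_mul, ← pow_succ]
        · rw [Finset.sum_range_succ, hm0 _ (by omega), mul_zero, zero_mul, add_zero,
            Finset.mul_sum]
          exact Finset.sum_congr rfl fun i _ => by ring
      refine ⟨fun a => (if 1 ≤ a then m (a - 1) ^ q else 0) - c * m a, ?_, ?_, ?_, ?_⟩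
      · simp only [le_add_iff_nonneg_left, zero_le, if_pos]
        rw [show k + 1 - 1 = k from rfl, hmk, one_pow, hm0 _ (by omega), mul_zero, sub_zero]
      · intro a ha
        simp only [if_pos (show 1 ≤ a by omega), hm0 (a - 1) (by omega), hm0 a (by omega),
          zero_pow hq0.ne', mul_zero, sub_zero]
      · intro a
        apply A1.sub_mem
        · by_cases h1 : 1 ≤ a
          · rw [if_pos h1]; exact A1.pow_mem (hmA _) _
          · rw [if_neg h1]; exact A1.zero_mem
        · apply A1.mul_mem _ (hmA a)
          apply A1.pow_mem
          apply Subfield.sum_mem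
          intro i _
          exact A1.mul_mem (hmA i) (A1.pow_mem (huA (Fin.last k)) _)
      · intro i
        induction i using Fin.lastCases with
        | last =>
            rw [hev' (u (Fin.last k)), ← hz,
              show z ^ q = z ^ (q - 1) * z by rw [← pow_succ, Nat.sub_add_cancel hq0], ← hc]
            ring
        | cast j =>
            rw [hev' (u j.castSucc), hmev j]
            simp [zero_pow hq0.ne']



theorem key {Fq : Type*} [Field Fq] [Fintype Fq] [Fintype K] [Algebra Fq K]
    (q k t₁ t₂ h : ℕ) (hq : Fintype.card Fq = q)
    (A1 A2 : Subfield K) (hsub : A1 ≤ A2)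
    (halg : ∀ a : Fq, algebraMap Fq K a ∈ A1)
    (hh : h < k) (ht : t₁ < t₂)
    (η₁ η₂ : K) (hη₁ : η₁ ∈ A2) (hη₁' : η₁ ∉ A1) (hη₂ : η₂ ∉ A2)
    (lam : Fin k → K) (u : Fin k → K) (hu : LinearIndependent Fq u)
    (huA : ∀ i, u i ∈ A1)
    (hev : ∀ i, ev q (k + t₂ + 1)
      (Fc k t₁ t₂ (fun j => if hj : j < k then lam ⟨j, hj⟩ else 0) (lam ⟨h, hh⟩) η₁ η₂)
      (u i) = 0) :
    lam = 0 := by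
  classical
  set lam' : ℕ → K := fun j => if hj : j < k then lam ⟨j, hj⟩ else 0 with hlam'
  set lamh : K := lam ⟨h, hh⟩ with hlamh
  set F : ℕ → K := Fc k t₁ t₂ lam' lamh η₁ η₂ with hF
  set N := k + t₂ + 1 with hN
  have hq2 : 2 ≤ q := hq ▸ Fintype.one_lt_card
  have hq0 : 0 < q := by omega
  -- characteristic facts
  set p := ringChar Fq with hp
  haveI hcp : CharP Fq p := ringChar.charP Fq
  have hpp : p.Prime := CharP.char_is_prime Fq p
  haveI : Fact p.Prime := ⟨hpp⟩
  obtain ⟨e0, -, hqe⟩ := FiniteField.card Fq p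
  rw [hq] at hqe
  haveI : CharP K p := charP_of_injective_algebraMap (algebraMap Fq K).injective p
  have hfr1 : ∀ x y : K, ∀ i : ℕ, (x + y) ^ q ^ i = x ^ q ^ i + y ^ q ^ i := by
    intro x y i
    rw [hqe, ← pow_mul]
    apply add_pow_char_pow
  -- the kernel subspace
  set U : Submodule Fq K := Submodule.span Fq (Set.range u) with hU
  haveI : Fintype U := Fintype.ofFinite _
  have hcardU : Fintype.card U = q ^ k := by
    rw [Module.card_eq_pow_finrank (K := Fq) (V := U), hq, hU, finrank_span_eq_card hu,
      Fintype.card_fin]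
  have hevU : ∀ x ∈ U, ev q N F x = 0 := by
    intro x hx
    obtain ⟨w, rfl⟩ := (Submodule.mem_span_range_iff_exists_fun Fq).mp hx
    rw [ev_linear q N hq hfr1]
    simp [hev]
  -- the subspace polynomial
  obtain ⟨m, hmk, hm0, hmA, hmev⟩ := exists_m q hq0 hfr1 A1 k u huA
  have hmU : ∀ x ∈ U, ev q (k + 1) m x = 0 := by
    intro x hx
    obtain ⟨w, rfl⟩ := (Submodule.mem_span_range_iff_exists_fun Fq).mp hx
    rw [ev_linear q (k + 1) hq hfr1]
    simp [hmev]
  -- structure of the division coefficients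
  set P : K → Prop := fun x => ∃ a ∈ A1, ∃ b ∈ A1, x = η₁ * lamh * a + η₂ * lamh * b
    with hPdef
  have hP0 : P 0 := ⟨0, A1.zero_mem, 0, A1.zero_mem, by ring⟩
  have hPadd : ∀ x y : K, P x → P y → P (x + y) := by
    rintro x y ⟨a, ha, b, hb, rfl⟩ ⟨a', ha', b', hb', rfl⟩
    exact ⟨a + a', A1.add_mem ha ha', b + b', A1.add_mem hb hb', by ring⟩
  have hPsub : ∀ x y : K, P x → P y → P (x - y) := by
    rintro x y ⟨a, ha, b, hb, rfl⟩ ⟨a', ha', b', hb', rfl⟩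
    exact ⟨a - a', A1.sub_mem ha ha', b - b', A1.sub_mem hb hb', by ring⟩
  have hPmul : ∀ x c : K, P x → c ∈ A1 → P (x * c) := by
    rintro x c ⟨a, ha, b, hb, rfl⟩ hc
    exact ⟨a * c, A1.mul_mem ha hc, b * c, A1.mul_mem hb hc, by ring⟩
  have hPFk : ∀ b : ℕ, P (F (k + b)) := by
    intro b
    rw [hF]
    show P (Fc k t₁ t₂ lam' lamh η₁ η₂ (k + b))
    unfold Fc
    rw [if_neg (by omega)]
    by_cases h1 : k + b = k + t₁
    · rw [if_pos h1]; exact ⟨1, A1.one_mem, 0, A1.zero_mem, by ring⟩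
    · rw [if_neg h1]
      by_cases h2 : k + b = k + t₂
      · rw [if_pos h2]; exact ⟨0, A1.zero_mem, 1, A1.one_mem, by ring⟩
      · rw [if_neg h2]; exact hP0
  have hPg : ∀ d, P (divSeq q k t₂ F m d) := by
    intro d
    induction d using Nat.strong_induction_on with
    | _ d ih =>
      rw [divSeq_eq]
      apply hPsub
      · exact hPFk _
      · apply Finset.sum_induction _ P hPadd hP0
        intro r hr
        unfold termD
        split
        · exact hPmul _ _ (ih r (Finset.mem_range.mp hr)) (A1.pow_mem (hmA _) _)
        · exact hP0
  have hPC : ∀ j : ℕ, P (Cc q k t₂ F m j) := by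
    intro j
    unfold Cc
    apply Finset.sum_induction _ P hPadd hP0
    intro d _
    unfold termD
    split
    · exact hPmul _ _ (hPg d) (A1.pow_mem (hmA _) _)
    · exact hP0
  -- the remainder polynomial vanishes identically
  set G : ℕ → K := fun j => F j - Cc q k t₂ F m j with hG
  have hGk : ∀ j, k ≤ j → G j = 0 := by
    intro j hj
    by_cases hjN : j < N
    · have hcc := Cc_eq_F q k t₂ hq0 F m hmk hm0 (t₂ - (j - k)) (by omega)
      have hje : k + (t₂ - (t₂ - (j - k))) = j := by omega
      rw [hje] at hcc
      simp only [hG, hcc, sub_self]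
    · have hcc := Cc_eq_zero q k t₂ hq0 F m hm0 j (by omega)
      have hFj : F j = 0 := by
        rw [hF]
        show Fc k t₁ t₂ lam' lamh η₁ η₂ j = 0
        unfold Fc
        rw [if_neg (by omega), if_neg (by omega), if_neg (by omega)]
      simp only [hG, hcc, hFj, sub_self]
  have hRzero : RR q k G = 0 := by
    apply Polynomial.eq_zero_of_natDegree_lt_card_of_eval_eq_zero (RR q k G)
      (f := fun x : U => (x : K)) Subtype.val_injective
    · intro i
      rw [RR_eval]
      rw [← ev_extend q k N G (i : K) (by omega) (fun j hj _ => hGk j hj)]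
      have hsplit : ev q N G (i : K)
          = ev q N F (i : K) - ev q N (Cc q k t₂ F m) (i : K) := by
        rw [hG]; exact ev_sub q N F (Cc q k t₂ F m) (i : K)
      rw [hsplit, hevU _ i.2,
        ev_comp q k t₂ hq0 F m hm0 (fun s f i => sum_pow_q q hq0 hfr1 s f i),
        hmU _ i.2]
      simp [zero_pow (Nat.pow_pos hq0).ne']
    · rw [hcardU]
      exact lt_of_le_of_lt (RR_natDegree q k hq0 (by omega) G)
        (Nat.pow_lt_pow_right (by omega) (by omega))
  have hFC : ∀ i, i < k → F i = Cc q k t₂ F m i := by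
    intro i hi
    have h1 : (RR q k G).coeff (q ^ i) = G i := RR_coeff q k hq2 G i hi
    rw [hRzero, Polynomial.coeff_zero] at h1
    have h2 : F i - Cc q k t₂ F m i = 0 := by
      have := h1.symm
      simpa [hG] using this
    exact sub_eq_zero.mp h2
  have hFlt : ∀ i : ℕ, ∀ hi : i < k, F i = lam ⟨i, hi⟩ := by
    intro i hi
    rw [hF]
    show Fc k t₁ t₂ lam' lamh η₁ η₂ i = lam ⟨i, hi⟩
    unfold Fc
    rw [if_pos hi, hlam']
    exact dif_pos hi
  have hlamh0 : lamh = 0 := by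
    by_contra hne
    obtain ⟨a, ha, b, hb, heq⟩ := hPC h
    have h2 : lamh = η₁ * lamh * a + η₂ * lamh * b := by
      rw [← heq, ← hFC h hh, hFlt h hh, ← hlamh]
    have h3 : (1 : K) = η₁ * a + η₂ * b := by
      apply mul_left_cancel₀ hne
      rw [mul_one]
      linear_combination h2
    exact no_rel A1 A2 hsub hη₁ hη₁' hη₂ ha hb h3
  funext i
  obtain ⟨a, ha, b, hb, heq⟩ := hPC (i : ℕ)
  have : lam i = 0 := by
    have h4 : F (i : ℕ) = lam i := by
      rw [hFlt (i : ℕ) i.2]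
    rw [← h4, hFC _ i.2, heq, hlamh0]
    ring
  simpa using this

end C2Aux

set_option maxHeartbeats 2000000 in
open C2Aux in
/-- for a proper chain of subfields `F_q ⊊ F_{q^{s₁}} ⊊ F_{q^{s₂}} ⊊ F_{q^m}`
with `n ≤ s₁`, evaluation points in `F_{q^{s₁}}`, `η₁ ∈ F_{q^{s₂}} \ F_{q^{s₁}}` and
`η₂ ∈ F_{q^m} \ F_{q^{s₂}}`, the twisted Gabidulin code `C₂` with two twists is MRD. -/
theorem C2_chain_MRD {Fq F1 F2 K : Type*} [Field Fq] [Fintype Fq] [Field F1] [Fintype F1]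
    [Field F2] [Fintype F2] [Field K] [Fintype K]
    [Algebra Fq F1] [Algebra F1 F2] [Algebra F2 K] [Algebra F1 K] [Algebra Fq K]
    [IsScalarTower F1 F2 K] [IsScalarTower Fq F1 K]
    (q s₁ s₂ m n k h t₁ t₂ : ℕ) (hq : Fintype.card Fq = q)
    (hF1 : Fintype.card F1 = q ^ s₁) (hF2 : Fintype.card F2 = q ^ s₂)
    (hK : Fintype.card K = q ^ m)
    (h1 : 1 < s₁) (h12 : s₁ < s₂) (h2m : s₂ < m) (hd1 : s₁ ∣ s₂) (hd2 : s₂ ∣ m)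
    (hns : n ≤ s₁) (hkn : k < n) (hh : h < k) (ht : t₁ < t₂) (ht₂ : t₂ < n - k)
    (β : ℕ → F1) (hβ : LinearIndependent Fq (fun i : Fin n => β (i:ℕ)))
    (η₁ η₂ : K)
    (hη₁ : η₁ ∈ Set.range (algebraMap F2 K) ∧ η₁ ∉ Set.range (algebraMap F1 K))
    (hη₂ : η₂ ∉ Set.range (algebraMap F2 K)) :
    sInf {w : ℕ | ∃ c ∈ Submodule.span K (Set.range (fun i : Fin k => fun j : Fin n =>
          if (i:ℕ) = h then
            algebraMap F1 K (β (j:ℕ)) ^ q ^ h + η₁ * algebraMap F1 K (β (j:ℕ)) ^ q ^ (k + t₁)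
              + η₂ * algebraMap F1 K (β (j:ℕ)) ^ q ^ (k + t₂)
          else algebraMap F1 K (β (j:ℕ)) ^ q ^ (i:ℕ))),
        c ≠ 0 ∧ w = Module.finrank Fq (Submodule.span Fq (Set.range c))} = n - k + 1 := by
  classical
  set A1 : Subfield K := (algebraMap F1 K).fieldRange with hA1
  set A2 : Subfield K := (algebraMap F2 K).fieldRange with hA2
  have hsub : A1 ≤ A2 := by
    rintro x hx
    obtain ⟨y, rfl⟩ := RingHom.mem_fieldRange.mp hx
    exact RingHom.mem_fieldRange.mpr
      ⟨algebraMap F1 F2 y, (IsScalarTower.algebraMap_apply F1 F2 K y).symm⟩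
  have halg : ∀ a : Fq, algebraMap Fq K a ∈ A1 := fun a =>
    RingHom.mem_fieldRange.mpr
      ⟨algebraMap Fq F1 a, (IsScalarTower.algebraMap_apply Fq F1 K a).symm⟩
  have hη₁A2 : η₁ ∈ A2 := by
    obtain ⟨y, hy⟩ := hη₁.1; exact RingHom.mem_fieldRange.mpr ⟨y, hy⟩
  have hη₁' : η₁ ∉ A1 := fun hmem => by
    obtain ⟨y, hy⟩ := RingHom.mem_fieldRange.mp hmem; exact hη₁.2 ⟨y, hy⟩
  have hη₂' : η₂ ∉ A2 := fun hmem => by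
    obtain ⟨y, hy⟩ := RingHom.mem_fieldRange.mp hmem; exact hη₂ ⟨y, hy⟩
  have hq2 : 2 ≤ q := hq ▸ Fintype.one_lt_card
  have hq0 : 0 < q := by omega
  set p := ringChar Fq with hp
  haveI : CharP Fq p := ringChar.charP Fq
  have hpp : p.Prime := CharP.char_is_prime Fq p
  haveI : Fact p.Prime := ⟨hpp⟩
  obtain ⟨e0, -, hqe⟩ := FiniteField.card Fq p
  rw [hq] at hqe
  haveI : CharP K p := charP_of_injective_algebraMap (algebraMap Fq K).injective p
  have hfr1 : ∀ x y : K, ∀ i : ℕ, (x + y) ^ q ^ i = x ^ q ^ i + y ^ q ^ i := by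
    intro x y i; rw [hqe, ← pow_mul]; apply add_pow_char_pow
  have hβK : LinearIndependent Fq (fun j : Fin n => algebraMap F1 K (β (j : ℕ))) := by
    have hinj : LinearMap.ker (AlgHom.toLinearMap (IsScalarTower.toAlgHom Fq F1 K)) = ⊥ :=
      LinearMap.ker_eq_bot.mpr (algebraMap F1 K).injective
    exact hβ.map' _ hinj
  set rows : Fin k → Fin n → K := (fun i : Fin k => fun j : Fin n =>
          if (i:ℕ) = h then
            algebraMap F1 K (β (j:ℕ)) ^ q ^ h + η₁ * algebraMap F1 K (β (j:ℕ)) ^ q ^ (k + t₁)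
              + η₂ * algebraMap F1 K (β (j:ℕ)) ^ q ^ (k + t₂)
          else algebraMap F1 K (β (j:ℕ)) ^ q ^ (i:ℕ)) with hrows
  set N := k + t₂ + 1 with hN
  -- the codeword attached to a coefficient vector is the evaluation of the q-polynomial
  have claimA : ∀ (lam : Fin k → K) (j : Fin n),
      (∑ i, lam i • rows i) j
        = ev q N (Fc k t₁ t₂ (fun j' => if hj : j' < k then lam ⟨j', hj⟩ else 0)
            (lam ⟨h, hh⟩) η₁ η₂) (algebraMap F1 K (β (j : ℕ))) := by
    intro lam j
    set x : K := algebraMap F1 K (β (j : ℕ)) with hx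
    set lam' : ℕ → K := fun j' => if hj : j' < k then lam ⟨j', hj⟩ else 0 with hlam'
    have hlam'' : ∀ i : Fin k, lam' (i : ℕ) = lam i := by
      intro i
      rw [hlam']
      simp only [Fin.is_lt, dite_true, Fin.eta]
    have hRHS : ev q N (Fc k t₁ t₂ lam' (lam ⟨h, hh⟩) η₁ η₂) x
        = (∑ i ∈ Finset.range k, lam' i * x ^ q ^ i)
          + (η₁ * (lam ⟨h, hh⟩) * x ^ q ^ (k + t₁)
             + η₂ * (lam ⟨h, hh⟩) * x ^ q ^ (k + t₂)) := by
      unfold ev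
      rw [Finset.range_eq_Ico, ← Finset.sum_Ico_consecutive _ (Nat.zero_le k)
        (by omega : k ≤ N)]
      congr 1
      · rw [← Finset.range_eq_Ico]
        refine Finset.sum_congr rfl fun i hi => ?_
        rw [Finset.mem_range] at hi
        unfold Fc
        rw [if_pos hi]
      · have hpair : ({k + t₁, k + t₂} : Finset ℕ) ⊆ Finset.Ico k N := by
          intro i hi
          simp only [Finset.mem_insert, Finset.mem_singleton] at hi
          rcases hi with rfl | rfl <;> (rw [Finset.mem_Ico]; omega)
        rw [← Finset.sum_subset hpair (by
          intro i hi hi'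
          simp only [Finset.mem_Ico] at hi
          simp only [Finset.mem_insert, Finset.mem_singleton] at hi'
          push_neg at hi'
          unfold Fc
          rw [if_neg (by omega), if_neg hi'.1, if_neg hi'.2, zero_mul])]
        have hv1 : Fc k t₁ t₂ lam' (lam ⟨h, hh⟩) η₁ η₂ (k + t₁) = η₁ * lam ⟨h, hh⟩ := by
          unfold Fc
          rw [if_neg (show ¬ (k + t₁ < k) by omega), if_pos rfl]
        have hv2 : Fc k t₁ t₂ lam' (lam ⟨h, hh⟩) η₁ η₂ (k + t₂) = η₂ * lam ⟨h, hh⟩ := by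
          unfold Fc
          rw [if_neg (show ¬ (k + t₂ < k) by omega),
            if_neg (show ¬ (k + t₂ = k + t₁) by omega), if_pos rfl]
        rw [Finset.sum_pair (by omega : k + t₁ ≠ k + t₂), hv1, hv2]
    rw [hRHS]
    rw [Finset.sum_apply]
    have hterm : ∀ i : Fin k, (lam i • rows i) j
        = lam' (i : ℕ) * x ^ q ^ (i : ℕ)
          + (if i = (⟨h, hh⟩ : Fin k) then
              η₁ * (lam ⟨h, hh⟩) * x ^ q ^ (k + t₁) + η₂ * (lam ⟨h, hh⟩) * x ^ q ^ (k + t₂)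
            else 0) := by
      intro i
      rw [Pi.smul_apply, smul_eq_mul]
      simp only [hrows]
      by_cases hi : (i : ℕ) = h
      · have hieq : i = ⟨h, hh⟩ := Fin.ext hi
        rw [if_pos hi, if_pos hieq, hlam'' i, hi, hieq]
        ring
      · have hieq : i ≠ ⟨h, hh⟩ := fun hc => hi (by rw [hc])
        rw [if_neg hi, if_neg hieq, hlam'' i, add_zero]
    rw [Finset.sum_congr rfl fun i _ => hterm i, Finset.sum_add_distrib]
    congr 1
    · rw [← Fin.sum_univ_eq_sum_range (fun i => lam' i * x ^ q ^ i) k]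
    · rw [Finset.sum_ite_eq' Finset.univ (⟨h, hh⟩ : Fin k)]
      simp
  -- any nonzero coefficient vector with k independent kernel points is zero (main key)
  have keyapp : ∀ (lam : Fin k → K) (u : Fin k → K), LinearIndependent Fq u →
      (∀ i, u i ∈ A1) →
      (∀ i, ev q N (Fc k t₁ t₂ (fun j' => if hj : j' < k then lam ⟨j', hj⟩ else 0)
        (lam ⟨h, hh⟩) η₁ η₂) (u i) = 0) → lam = 0 := by
    intro lam u hu huA huev
    exact key q k t₁ t₂ h hq A1 A2 hsub halg hh ht η₁ η₂ hη₁A2 hη₁' hη₂' lam u hu huA huev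
  -- nonzero coefficient vectors give nonzero codewords
  have hne : ∀ lam : Fin k → K, lam ≠ 0 → (∑ i, lam i • rows i) ≠ 0 := by
    intro lam hlam0 hc0
    apply hlam0
    refine keyapp lam (fun i => algebraMap F1 K (β ((Fin.castLE hkn.le i : Fin n) : ℕ)))
      (hβK.comp _ (Fin.castLE_injective hkn.le)) (fun i => ⟨β _, rfl⟩) (fun i => ?_)
    rw [← claimA lam (Fin.castLE hkn.le i), hc0]
    rfl
  -- lower bound on the weight of any nonzero codeword
  have lower : ∀ c : Fin n → K, c ∈ Submodule.span K (Set.range rows) → c ≠ 0 →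
      n - k + 1 ≤ Module.finrank Fq (Submodule.span Fq (Set.range c)) := by
    intro c hc hc0
    obtain ⟨lam, hlam⟩ := (Submodule.mem_span_range_iff_exists_fun K).mp hc
    by_contra hlt
    push_neg at hlt
    have hw : Module.finrank Fq (Submodule.span Fq (Set.range c)) ≤ n - k := by omega
    set T : (Fin n → Fq) →ₗ[Fq] K := Fintype.linearCombination Fq c with hT
    have hrange : LinearMap.range T = Submodule.span Fq (Set.range c) :=
      Fintype.range_linearCombination Fq c
    have hrank : Module.finrank Fq (LinearMap.range T)
        + Module.finrank Fq (LinearMap.ker T) = n := by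
      rw [LinearMap.finrank_range_add_finrank_ker,
        Module.finrank_fintype_fun_eq_card, Fintype.card_fin]
    have hkerge : k ≤ Module.finrank Fq (LinearMap.ker T) := by
      rw [hrange] at hrank
      omega
    set B := Module.finBasis Fq (LinearMap.ker T) with hB
    set v : Fin k → (LinearMap.ker T) := fun i => B (Fin.castLE hkerge i) with hv'
    have hv : LinearIndependent Fq v :=
      B.linearIndependent.comp _ (Fin.castLE_injective hkerge)
    set L : (Fin n → Fq) →ₗ[Fq] K :=
      Fintype.linearCombination Fq (fun j : Fin n => algebraMap F1 K (β (j : ℕ))) with hL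
    have hLinj : LinearMap.ker L = ⊥ := by
      rw [LinearMap.ker_eq_bot']
      intro a ha
      rw [hL, Fintype.linearCombination_apply] at ha
      have := Fintype.linearIndependent_iff.mp hβK a ha
      funext j'
      exact this j'
    set u : Fin k → K := fun i => L ((v i : Fin n → Fq)) with hu'
    have hui : LinearIndependent Fq u :=
      (hv.map' (Submodule.subtype _) (Submodule.ker_subtype _)).map' L hLinj
    have huA : ∀ i, u i ∈ A1 := by
      intro i
      rw [hu']
      show L _ ∈ A1
      rw [hL, Fintype.linearCombination_apply]
      apply Subfield.sum_mem
      intro j' _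
      rw [Algebra.smul_def]
      exact A1.mul_mem (halg _) ⟨β _, rfl⟩
    have hcw : ∀ j' : Fin n,
        ev q N (Fc k t₁ t₂ (fun j'' => if hj : j'' < k then lam ⟨j'', hj⟩ else 0)
          (lam ⟨h, hh⟩) η₁ η₂) (algebraMap F1 K (β (j' : ℕ))) = c j' := by
      intro j'
      rw [← claimA lam j', hlam]
    have huev : ∀ i, ev q N (Fc k t₁ t₂ (fun j' => if hj : j' < k then lam ⟨j', hj⟩ else 0)
        (lam ⟨h, hh⟩) η₁ η₂) (u i) = 0 := by
      intro i
      rw [hu']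
      show ev q N _ (L _) = 0
      rw [hL, Fintype.linearCombination_apply, ev_linear q N hq hfr1]
      have hTv : ∑ j' : Fin n, (v i : Fin n → Fq) j' • c j' = 0 :=
        LinearMap.mem_ker.mp (v i).2
      have hsc : ∑ j' : Fin n, (v i : Fin n → Fq) j' •
          ev q N (Fc k t₁ t₂ (fun j'' => if hj : j'' < k then lam ⟨j'', hj⟩ else 0)
            (lam ⟨h, hh⟩) η₁ η₂) (algebraMap F1 K (β (j' : ℕ)))
          = ∑ j' : Fin n, (v i : Fin n → Fq) j' • c j' :=
        Finset.sum_congr rfl fun j' _ => by rw [hcw j']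
      rw [hsc, hTv]
    have : lam = 0 := keyapp lam u hui huA huev
    apply hc0
    rw [← hlam, this]
    simp
  -- construct a codeword of weight exactly n - k + 1
  have hk1n : k - 1 ≤ n := by omega
  set Ψ : (Fin k → K) →ₗ[K] (Fin (k - 1) → K) :=
    (LinearMap.funLeft K K (fun j' : Fin (k - 1) => Fin.castLE hk1n j')).comp
      (Fintype.linearCombination K rows) with hΨ
  have hΨnotinj : ¬ Function.Injective Ψ := by
    intro hinj
    have hle := LinearMap.finrank_le_finrank_of_injective hinj
    rw [Module.finrank_fintype_fun_eq_card, Module.finrank_fintype_fun_eq_card,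
      Fintype.card_fin, Fintype.card_fin] at hle
    omega
  have hexists : ∃ lam : Fin k → K, lam ≠ 0 ∧ Ψ lam = 0 := by
    rw [Function.not_injective_iff] at hΨnotinj
    obtain ⟨a, b, hab, hne'⟩ := hΨnotinj
    exact ⟨a - b, sub_ne_zero.mpr hne', by rw [map_sub, hab, sub_self]⟩
  obtain ⟨lam, hlam0, hΨ0⟩ := hexists
  set c : Fin n → K := ∑ i, lam i • rows i with hc'
  have hc0 : c ≠ 0 := hne lam hlam0
  have hcmem : c ∈ Submodule.span K (Set.range rows) :=
    Submodule.sum_mem _ fun i _ =>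
      Submodule.smul_mem _ _ (Submodule.subset_span (Set.mem_range_self i))
  have hczero : ∀ j' : Fin n, (j' : ℕ) < k - 1 → c j' = 0 := by
    intro j' hj'
    have h2 := congrFun hΨ0 ⟨(j' : ℕ), hj'⟩
    have h3 : Ψ lam ⟨(j' : ℕ), hj'⟩ = c j' := by
      show (∑ i, lam i • rows i) (Fin.castLE hk1n ⟨(j' : ℕ), hj'⟩) = c j'
      rw [hc']
      congr 1
    rw [← h3]
    simpa using h2
  -- weight upper bound: the nonzero entries live in the last n - k + 1 coordinates
  set d : Fin (n - k + 1) → K := fun a => c ⟨k - 1 + (a : ℕ), by omega⟩ with hd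
  have hspan : Submodule.span Fq (Set.range c) ≤ Submodule.span Fq (Set.range d) := by
    rw [Submodule.span_le]
    rintro _ ⟨j', rfl⟩
    by_cases hj' : (j' : ℕ) < k - 1
    · rw [hczero j' hj']
      exact Submodule.zero_mem _
    · have hj2 : (j' : ℕ) - (k - 1) < n - k + 1 := by omega
      have : c j' = d ⟨(j' : ℕ) - (k - 1), hj2⟩ := by
        rw [hd]
        congr 1
        exact Fin.ext (by simp; omega)
      rw [this]
      exact Submodule.subset_span (Set.mem_range_self _)
  have hupper : Module.finrank Fq (Submodule.span Fq (Set.range c)) ≤ n - k + 1 := by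
    refine le_trans (Submodule.finrank_mono hspan) ?_
    have := finrank_range_le_card (R := Fq) d
    rw [Fintype.card_fin] at this
    exact this
  have hlow := lower c hcmem hc0
  have hwt : Module.finrank Fq (Submodule.span Fq (Set.range c)) = n - k + 1 :=
    le_antisymm hupper hlow
  -- conclude
  apply le_antisymm
  · exact Nat.sInf_le ⟨c, hcmem, hc0, hwt.symm⟩
  · refine le_csInf ⟨n - k + 1, ⟨c, hcmem, hc0, hwt.symm⟩⟩ ?_
    rintro w ⟨c', hc'mem, hc'0, rfl⟩
    exact lower c' hc'mem hc'0
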